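/- arXiv:1301.2708 — 2 statements merged into one kernel-verified Lean document; each statement's English description precedes it below -/
import Mathlib

section
/- Let n ≥ 2 be an integer and x = (x_1,…,x_n) ∈ ℝ^n. Then p(x, T_n = 2) ≥ (1/(2√2)) · exp( −x̄_n² / 2 ) · p(x, T_n = 1), where x̄_n = (1/n) ∑_{j=1}^n x_j. In particular, since p(x, T_n = 1) = m(x_{1:n})/n, the ratio p(x, T_n = 2)/p(x, T_n = 1) is bounded below by (1/(2√2)) exp(−x̄_n²/2). -/
open MeasureTheory Filter Finset

/-- The standard normal density `φ(u) = (2π)^{-1/2} exp(-u²/2)`. -/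
noncomputable def stdNormalPDF (u : ℝ) : ℝ :=
  (Real.sqrt (2 * Real.pi))⁻¹ * Real.exp (-u ^ 2 / 2)

/-- The single-cluster marginal `m(x_S)` of a unit-variance normal component with
standard normal prior on the mean, in closed form. -/
noncomputable def clusterMarginal {n : ℕ} (x : Fin n → ℝ) (S : Finset (Fin n)) : ℝ :=
  (Real.sqrt (S.card + 1))⁻¹ * (∏ j ∈ S, stdNormalPDF (x j)) *
    Real.exp ((∑ j ∈ S, x j) ^ 2 / (2 * (S.card + 1)))

/-- The set `𝒜_t(n)` of ordered partitions `(A_1, …, A_t)` of `{1,…,n}` into `t`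
nonempty disjoint sets. -/
def orderedPartitions (n t : ℕ) : Finset (Fin t → Finset (Fin n)) :=
  Finset.univ.filter fun A =>
    (∀ i, (A i).Nonempty) ∧ (∀ i j, i ≠ j → Disjoint (A i) (A j)) ∧
      Finset.univ.biUnion A = Finset.univ

/-- The CRP (α = 1) weight `p(A) = (1/(n!·t!)) ∏_i (|A_i| - 1)!` of an ordered partition
of `{1,…,n}` into `t` parts. -/
noncomputable def crpWeight {n t : ℕ} (A : Fin t → Finset (Fin n)) : ℝ :=
  (1 / ((n.factorial : ℝ) * (t.factorial : ℝ))) * ∏ i, (((A i).card - 1).factorial : ℝ)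

/-- The joint law of the data and the number of clusters under the standard normal DPM
with concentration parameter `α = 1`:
`p(x, T_n = t) = ∑_{A ∈ 𝒜_t(n)} p(A) ∏_i m(x_{A_i})`. -/
noncomputable def pJoint (n t : ℕ) (x : Fin n → ℝ) : ℝ :=
  ∑ A ∈ orderedPartitions n t, crpWeight A * ∏ i, clusterMarginal x (A i)

/-- The posterior probability of one cluster,
`p(T_n = 1 | x) = p(x, T_n = 1) / ∑_{t=1}^n p(x, T_n = t)`. -/
noncomputable def posteriorOne (n : ℕ) (x : Fin n → ℝ) : ℝ :=
  pJoint n 1 x / ∑ t ∈ Finset.Icc 1 n, pJoint n t x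

lemma stdNormalPDF_pos (u : ℝ) : 0 < stdNormalPDF u := by
  unfold stdNormalPDF
  have := Real.pi_pos
  positivity

lemma clusterMarginal_pos {n : ℕ} (x : Fin n → ℝ) (S : Finset (Fin n)) :
    0 < clusterMarginal x S := by
  unfold clusterMarginal
  have h : (0:ℝ) < Real.sqrt (S.card + 1) := Real.sqrt_pos.mpr (by positivity)
  have h2 : 0 < ∏ j ∈ S, stdNormalPDF (x j) :=
    Finset.prod_pos fun j _ => stdNormalPDF_pos (x j)
  positivity

lemma crpWeight_nonneg {n t : ℕ} (A : Fin t → Finset (Fin n)) : 0 ≤ crpWeight A := by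
  unfold crpWeight
  positivity

lemma orderedPartitions_one (n : ℕ) (hn : 1 ≤ n) :
    orderedPartitions n 1 = {fun _ => (Finset.univ : Finset (Fin n))} := by
  ext A
  simp only [orderedPartitions, mem_filter, mem_univ, true_and, mem_singleton]
  constructor
  · rintro ⟨h1, h2, h3⟩
    funext i
    have hi : i = 0 := Subsingleton.elim i 0
    subst hi
    apply Finset.eq_univ_of_forall
    intro a
    have ha : a ∈ Finset.univ.biUnion A := h3 ▸ mem_univ a
    obtain ⟨j, -, haj⟩ := mem_biUnion.mp ha
    have hj : j = 0 := Subsingleton.elim j 0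
    exact hj ▸ haj
  · rintro rfl
    refine ⟨fun i => ⟨⟨0, by omega⟩, mem_univ _⟩,
      fun i j hij => absurd (Subsingleton.elim i j) hij, ?_⟩
    apply Finset.eq_univ_of_forall
    intro a
    exact mem_biUnion.mpr ⟨0, mem_univ _, mem_univ _⟩

lemma pJoint_one (n : ℕ) (hn : 1 ≤ n) (x : Fin n → ℝ) :
    pJoint n 1 x = clusterMarginal x Finset.univ / n := by
  unfold pJoint
  rw [orderedPartitions_one n hn, Finset.sum_singleton]
  have hcard : (Finset.univ : Finset (Fin n)).card = n := by simp
  have hfact : ((n.factorial : ℝ)) = n * ((n - 1).factorial : ℝ) := by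
    exact_mod_cast (Nat.mul_factorial_pred (by omega)).symm
  unfold crpWeight
  rw [Fin.prod_univ_one, Fin.prod_univ_one, hcard]
  have hn0 : (0:ℝ) < n := by exact_mod_cast Nat.pos_of_ne_zero (by omega)
  have hf : (0:ℝ) < ((n-1).factorial : ℝ) := by exact_mod_cast (n-1).factorial_pos
  rw [Nat.factorial_one, Nat.cast_one, mul_one, hfact]
  field_simp

def splitPart (n : ℕ) (k : Fin n) : Fin 2 → Finset (Fin n) := ![{k}, {k}ᶜ]

lemma splitPart_mem (n : ℕ) (hn : 2 ≤ n) (k : Fin n) :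
    splitPart n k ∈ orderedPartitions n 2 := by
  simp only [orderedPartitions, mem_filter, mem_univ, true_and]
  refine ⟨?_, ?_, ?_⟩
  · intro i
    fin_cases i
    · exact ⟨k, by simp [splitPart]⟩
    · refine Finset.card_pos.mp ?_
      show 0 < (splitPart n k 1).card
      have hc : (splitPart n k 1).card = n - 1 := by
        simp [splitPart, Finset.card_compl]
      omega
  · intro i j hij
    fin_cases i <;> fin_cases j
    · exact absurd rfl hij
    · exact disjoint_compl_right
    · exact disjoint_compl_left
    · exact absurd rfl hij
  · apply Finset.eq_univ_of_forall
    intro a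
    by_cases h : a = k
    · exact mem_biUnion.mpr ⟨0, mem_univ _, by simp [splitPart, h]⟩
    · exact mem_biUnion.mpr ⟨1, mem_univ _, by simp [splitPart, h]⟩

lemma splitPart_inj (n : ℕ) : Function.Injective (splitPart n) := by
  intro k k' h
  have := congrFun h 0
  simpa [splitPart] using this

lemma term_eq (n : ℕ) (hn : 2 ≤ n) (x : Fin n → ℝ) (k : Fin n) :
    crpWeight (splitPart n k) * ∏ i, clusterMarginal x (splitPart n k i)
    = 1/(2*Real.sqrt 2) * (1/((n:ℝ)*((n:ℝ)-1)*Real.sqrt n) *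
        Real.exp ((x k)^2/4 + ((∑ j, x j) - x k)^2/(2*(n:ℝ)))) *
        (∏ j, stdNormalPDF (x j)) := by
  have hcard1 : ({k} : Finset (Fin n)).card = 1 := Finset.card_singleton k
  have hcardc : ({k}ᶜ : Finset (Fin n)).card = n - 1 := by
    simp [Finset.card_compl]
  have hsum : ∑ j ∈ ({k}ᶜ : Finset (Fin n)), x j = (∑ j, x j) - x k := by
    rw [eq_sub_iff_add_eq]
    rw [add_comm, ← Finset.sum_singleton x k]
    exact Finset.sum_add_sum_compl {k} x
  have hprod : stdNormalPDF (x k) * ∏ j ∈ ({k}ᶜ : Finset (Fin n)), stdNormalPDF (x j)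
      = ∏ j, stdNormalPDF (x j) := by
    rw [← Finset.prod_singleton (f := fun j => stdNormalPDF (x j)) (a := k)]
    exact Finset.prod_mul_prod_compl {k} _
  have hfact : ((n.factorial : ℝ)) = (n:ℝ) * ((n:ℝ)-1) * ((n-2).factorial : ℝ) := by
    obtain ⟨m, rfl⟩ : ∃ m, n = m + 2 := ⟨n-2, by omega⟩
    have h1 : (m+2).factorial = (m+2) * (m+1) * m.factorial := by
      simp [Nat.factorial_succ]; ring
    rw [h1]
    push_cast
    ring_nf
  unfold crpWeight clusterMarginal
  rw [Fin.prod_univ_two, Fin.prod_univ_two]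
  simp only [splitPart, Matrix.cons_val_zero, Matrix.cons_val_one, Matrix.head_cons]
  rw [hcard1, hcardc, hsum]
  rw [Finset.sum_singleton, Finset.prod_singleton]
  have hcast : ((n - 1 : ℕ) : ℝ) = (n:ℝ) - 1 := by
    push_cast [Nat.cast_sub (by omega : 1 ≤ n)]; ring
  rw [hcast]
  have h2 : ((1:ℕ):ℝ) + 1 = 2 := by norm_num
  rw [h2]
  have h3 : (n:ℝ) - 1 + 1 = (n:ℝ) := by ring
  rw [h3]
  have hc2 : (((1:ℕ) - 1).factorial : ℝ) = 1 := by norm_num [Nat.factorial]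
  have hc3 : (((n - 1) - 1).factorial : ℝ) = ((n-2).factorial : ℝ) := by
    rw [show n-1-1 = n-2 from by omega]
  rw [hc2, hc3, hfact, ← hprod]
  have hx : (x k)^2 / (2*2) = (x k)^2/4 := by ring
  rw [hx, Real.exp_add]
  have hs2 : Real.sqrt 2 ≠ 0 := by positivity
  have hsn : Real.sqrt (n:ℝ) ≠ 0 := by
    have : (0:ℝ) < n := by exact_mod_cast (by omega : 0 < n)
    positivity
  have hn1 : (n:ℝ) - 1 ≠ 0 := by
    have : (2:ℝ) ≤ n := by exact_mod_cast hn
    linarith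
  have hn0 : (n:ℝ) ≠ 0 := by
    have : (2:ℝ) ≤ n := by exact_mod_cast hn
    linarith
  have hfp : ((n-2).factorial : ℝ) ≠ 0 := by
    exact_mod_cast (n-2).factorial_pos.ne'
  rw [Nat.factorial_two]
  field_simp
  ring

lemma exp_core (N u s : ℝ) (hN : 2 ≤ N) :
    s^2/(2*(N+1)) - s^2/(2*N^2) ≤ u^2/4 + (s-u)^2/(2*N) := by
  rw [← sub_nonneg]
  have hN0 : (0:ℝ) < N := by linarith
  have hid : u^2/4 + (s-u)^2/(2*N) - (s^2/(2*(N+1)) - s^2/(2*N^2))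
      = (N*(N+1)*(N+2)*u^2 - 4*N*(N+1)*s*u + (4*N+2)*s^2) / (4*N^2*(N+1)) := by
    field_simp
    ring
  rw [hid]
  apply div_nonneg _ (by positivity)
  nlinarith [sq_nonneg ((N+2)*u - 2*s), sq_nonneg s, mul_pos hN0 (by linarith : (0:ℝ) < N+1),
    mul_nonneg (mul_nonneg hN0.le (by linarith : (0:ℝ) ≤ N+1)) (sq_nonneg ((N+2)*u - 2*s))]

lemma core (N u s : ℝ) (hN : 2 ≤ N) :
    1/(N^2 * Real.sqrt (N+1)) * Real.exp (s^2/(2*(N+1)) - s^2/(2*N^2))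
      ≤ 1/(N*(N-1)*Real.sqrt N) * Real.exp (u^2/4 + (s-u)^2/(2*N)) := by
  have hN0 : (0:ℝ) < N := by linarith
  have hsN : (0:ℝ) < Real.sqrt N := Real.sqrt_pos.mpr hN0
  have hsN1 : (0:ℝ) < Real.sqrt (N+1) := Real.sqrt_pos.mpr (by linarith)
  have hcoef : 1/(N^2 * Real.sqrt (N+1)) ≤ 1/(N*(N-1)*Real.sqrt N) := by
    apply one_div_le_one_div_of_le (mul_pos (mul_pos hN0 (by linarith)) hsN)
    have h1 : N*(N-1) ≤ N^2 := by nlinarith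
    have h2 : Real.sqrt N ≤ Real.sqrt (N+1) := Real.sqrt_le_sqrt (by linarith)
    calc N*(N-1)*Real.sqrt N ≤ N^2 * Real.sqrt N := by
          apply mul_le_mul_of_nonneg_right h1 hsN.le
      _ ≤ N^2 * Real.sqrt (N+1) := by
          apply mul_le_mul_of_nonneg_left h2 (by positivity)
  exact mul_le_mul hcoef (Real.exp_le_exp.mpr (exp_core N u s hN)) (Real.exp_pos _).le
    (le_of_lt (by apply div_pos one_pos (mul_pos (mul_pos hN0 (by linarith)) hsN)))

/-- For `n ≥ 2` and `x ∈ ℝⁿ`, `p(x, T_n = 1) = m(x_{1:n})/n` and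
`p(x, T_n = 2) ≥ (1/(2√2)) exp(-x̄_n²/2) p(x, T_n = 1)` where `x̄_n = (1/n) ∑_j x_j`;
in particular the ratio `p(x, T_n = 2)/p(x, T_n = 1)` is bounded below by
`(1/(2√2)) exp(-x̄_n²/2)`. -/
theorem two_cluster_vs_one_cluster (n : ℕ) (hn : 2 ≤ n) (x : Fin n → ℝ) :
    pJoint n 1 x = clusterMarginal x Finset.univ / n ∧
    pJoint n 2 x ≥
      1 / (2 * Real.sqrt 2) * Real.exp (-(((∑ j, x j) / n) ^ 2) / 2) * pJoint n 1 x := by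
  have hn1 : 1 ≤ n := by omega
  refine ⟨pJoint_one n hn1 x, ?_⟩
  set s : ℝ := ∑ j, x j with hs
  set P : ℝ := ∏ j, stdNormalPDF (x j) with hPdef
  have hP : 0 < P := Finset.prod_pos fun j _ => stdNormalPDF_pos (x j)
  have hN2 : (2:ℝ) ≤ (n:ℝ) := by exact_mod_cast hn
  have hN0 : (0:ℝ) < (n:ℝ) := by linarith
  -- the per-k lower bound value
  set c : ℝ := 1/(2*Real.sqrt 2) * (1/((n:ℝ)^2 * Real.sqrt ((n:ℝ)+1)) *
      Real.exp (s^2/(2*((n:ℝ)+1)) - s^2/(2*(n:ℝ)^2))) * P with hc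
  -- the RHS equals n * c
  have hRHS : 1 / (2 * Real.sqrt 2) * Real.exp (-((s / n) ^ 2) / 2) * pJoint n 1 x
      = (n:ℝ) * c := by
    rw [pJoint_one n hn1 x]
    unfold clusterMarginal
    have hcard : (Finset.univ : Finset (Fin n)).card = n := by simp
    rw [hcard, hc]
    rw [Real.exp_sub]
    have he : Real.exp (-((s / n) ^ 2) / 2) = (Real.exp (s^2/(2*(n:ℝ)^2)))⁻¹ := by
      rw [← Real.exp_neg]
      congr 1
      rw [div_pow]
      ring
    rw [he]
    have h1 : Real.sqrt 2 ≠ 0 := by positivity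
    have h2 : Real.sqrt ((n:ℝ)+1) ≠ 0 := by positivity
    have h3 : Real.exp (s^2/(2*(n:ℝ)^2)) ≠ 0 := (Real.exp_pos _).ne'
    rw [← hs, ← hPdef]
    field_simp
  rw [hRHS, ge_iff_le]
  -- per-k bound
  have hperk : ∀ k : Fin n, c ≤ crpWeight (splitPart n k) *
      ∏ i, clusterMarginal x (splitPart n k i) := by
    intro k
    rw [term_eq n hn x k, hc, ← hs]
    apply mul_le_mul_of_nonneg_right _ hP.le
    apply mul_le_mul_of_nonneg_left _ (by positivity)
    exact core (n:ℝ) (x k) s hN2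
  -- sum over the singleton-split partitions
  have hsubset : (Finset.univ : Finset (Fin n)).image (splitPart n) ⊆ orderedPartitions n 2 := by
    intro A hA
    obtain ⟨k, -, rfl⟩ := Finset.mem_image.mp hA
    exact splitPart_mem n hn k
  have hsum1 : ∑ A ∈ (Finset.univ : Finset (Fin n)).image (splitPart n),
      (crpWeight A * ∏ i, clusterMarginal x (A i)) ≤ pJoint n 2 x := by
    unfold pJoint
    apply Finset.sum_le_sum_of_subset_of_nonneg hsubset
    intro A _ _
    exact mul_nonneg (crpWeight_nonneg A)
      (le_of_lt (Finset.prod_pos fun i _ => clusterMarginal_pos x (A i)))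
  have hsum2 : ∑ A ∈ (Finset.univ : Finset (Fin n)).image (splitPart n),
      (crpWeight A * ∏ i, clusterMarginal x (A i))
      = ∑ k : Fin n, (crpWeight (splitPart n k) * ∏ i, clusterMarginal x (splitPart n k i)) := by
    rw [Finset.sum_image (fun k _ k' _ h => splitPart_inj n h)]
  have hsum3 : (n:ℝ) * c ≤ ∑ k : Fin n,
      (crpWeight (splitPart n k) * ∏ i, clusterMarginal x (splitPart n k i)) := by
    calc (n:ℝ) * c = ∑ _k : Fin n, c := by
          rw [Finset.sum_const, Finset.card_univ, Fintype.card_fin, nsmul_eq_mul]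
      _ ≤ _ := Finset.sum_le_sum fun k _ => hperk k
  linarith [hsum1, hsum2 ▸ hsum1]
end

section
/- Let n ≥ 2 be an integer and x = (x_1,…,x_n) ∈ ℝ^n. Define R_2(x) = n^{3/2} · p(x, T_n = 2) / p_0(x), where p_0(x) = ∏_{j=1}^n φ(x_j). Then R_2(x) ≥ ∑_{k=1}^{n−1} ( n / (2k(n−k)) ) · U_k(x), where U_k(x) = (1 / C(n,k)) ∑_{S ⊆ {1,…,n}, |S| = k} h(x_S) is the U-statistic with kernel h(x_S) = (|S|+1)^{−1/2} exp( (∑_{j∈S} x_j)² / (2(|S|+1)) ) and C(n,k) is the binomial coefficient. -/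
open MeasureTheory Filter Finset

/-- `p₀(x) = ∏_j φ(x_j)`, the density of i.i.d. standard normal data. -/
noncomputable def pZero {n : ℕ} (x : Fin n → ℝ) : ℝ := ∏ j, stdNormalPDF (x j)

/-- `R_t(x_{1:n}) = n^{3/2} · p(x_{1:n}, T_n = t) / p₀(x_{1:n})`. -/
noncomputable def Rstat (t n : ℕ) (x : Fin n → ℝ) : ℝ :=
  (n : ℝ) ^ (3 / 2 : ℝ) * pJoint n t x / pZero x

/-- The kernel `h(x_S) = m(x_S) / ∏_{j∈S} φ(x_j)
  = (|S|+1)^{-1/2} exp((∑_{j∈S} x_j)²/(2(|S|+1)))`. -/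
noncomputable def hKernel {n : ℕ} (x : Fin n → ℝ) (S : Finset (Fin n)) : ℝ :=
  (Real.sqrt (S.card + 1))⁻¹ * Real.exp ((∑ j ∈ S, x j) ^ 2 / (2 * (S.card + 1)))

/-- The U-statistic `U_k(x) = (1/C(n,k)) ∑_{S ⊆ {1,…,n}, |S| = k} h(x_S)`. -/
noncomputable def Ustat (n k : ℕ) (x : Fin n → ℝ) : ℝ :=
  (1 / (n.choose k : ℝ)) *
    ∑ S ∈ Finset.powersetCard k (Finset.univ : Finset (Fin n)), hKernel x S

-- auxiliary lemmas

lemma mem_orderedPartitions_two {n : ℕ} (A : Fin 2 → Finset (Fin n))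
    (hA : A ∈ orderedPartitions n 2) :
    A 1 = (A 0)ᶜ ∧ (A 0).Nonempty ∧ ((A 0)ᶜ).Nonempty := by
  simp only [orderedPartitions, mem_filter, mem_univ, true_and] at hA
  obtain ⟨hne, hdisj, hcov⟩ := hA
  have h1 : A 1 = (A 0)ᶜ := by
    ext a
    simp only [mem_compl]
    constructor
    · intro ha
      exact fun h0 => (hdisj 0 1 (by decide)).forall_ne_finset h0 ha rfl
    · intro ha
      have : a ∈ Finset.univ.biUnion A := hcov ▸ mem_univ a
      rcases mem_biUnion.mp this with ⟨i, _, hi⟩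
      fin_cases i
      · exact absurd hi ha
      · exact hi
  exact ⟨h1, hne 0, h1 ▸ hne 1⟩

lemma pair_mem_orderedPartitions_two {n : ℕ} (S : Finset (Fin n))
    (h1 : S.Nonempty) (h2 : Sᶜ.Nonempty) :
    ![S, Sᶜ] ∈ orderedPartitions n 2 := by
  simp only [orderedPartitions, mem_filter, mem_univ, true_and]
  refine ⟨fun i => by fin_cases i <;> simpa, fun i j hij => ?_, ?_⟩
  · fin_cases i <;> fin_cases j <;> simp_all [disjoint_compl_right, disjoint_compl_left]
  · ext a
    simp only [mem_biUnion, mem_univ, true_and, iff_true]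
    by_cases ha : a ∈ S
    · exact ⟨0, by simpa⟩
    · exact ⟨1, by simpa⟩

lemma eq_pair_of_mem {n : ℕ} (A : Fin 2 → Finset (Fin n))
    (hA : A ∈ orderedPartitions n 2) : A = ![A 0, (A 0)ᶜ] := by
  obtain ⟨h1, -, -⟩ := mem_orderedPartitions_two A hA
  funext i
  fin_cases i
  · rfl
  · simpa using h1

lemma pJoint_two (n : ℕ) (x : Fin n → ℝ) :
    pJoint n 2 x = ∑ S ∈ Finset.univ.filter
        (fun S : Finset (Fin n) => S.Nonempty ∧ Sᶜ.Nonempty),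
      crpWeight ![S, Sᶜ] * (clusterMarginal x S * clusterMarginal x Sᶜ) := by
  unfold pJoint
  refine Finset.sum_bij' (fun A _ => A 0) (fun S _ => ![S, Sᶜ]) ?_ ?_ ?_ ?_ ?_
  · intro A hA
    obtain ⟨-, hb, hc⟩ := mem_orderedPartitions_two A hA
    simp [hb, hc]
  · intro S hS
    simp only [mem_filter, mem_univ, true_and] at hS
    exact pair_mem_orderedPartitions_two S hS.1 hS.2
  · intro A hA
    exact (eq_pair_of_mem A hA).symm
  · intro S hS
    simp
  · intro A hA
    conv_lhs => rw [eq_pair_of_mem A hA]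
    simp [Fin.prod_univ_two]

lemma clusterMarginal_eq {n : ℕ} (x : Fin n → ℝ) (S : Finset (Fin n)) :
    clusterMarginal x S = (∏ j ∈ S, stdNormalPDF (x j)) * hKernel x S := by
  unfold clusterMarginal hKernel; ring

lemma pZero_pos {n : ℕ} (x : Fin n → ℝ) : 0 < pZero x := by
  unfold pZero
  apply Finset.prod_pos
  intro j _
  unfold stdNormalPDF
  positivity

lemma hKernel_nonneg {n : ℕ} (x : Fin n → ℝ) (S : Finset (Fin n)) : 0 ≤ hKernel x S := by
  unfold hKernel; positivity

lemma hKernel_ge {n : ℕ} (x : Fin n → ℝ) (S : Finset (Fin n)) (h : S.card + 1 ≤ n) :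
    (Real.sqrt n)⁻¹ ≤ hKernel x S := by
  unfold hKernel
  have h1 : (Real.sqrt n)⁻¹ ≤ (Real.sqrt (S.card + 1))⁻¹ := by
    apply inv_anti₀
    · positivity
    · apply Real.sqrt_le_sqrt
      exact_mod_cast h
  calc (Real.sqrt n)⁻¹ ≤ (Real.sqrt (S.card + 1))⁻¹ := h1
    _ = (Real.sqrt (S.card + 1))⁻¹ * 1 := by ring
    _ ≤ _ := by
        apply mul_le_mul_of_nonneg_left _ (by positivity)
        apply Real.one_le_exp
        positivity

lemma coef_eq (n k : ℕ) (hk1 : 1 ≤ k) (hkn : k < n) :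
    (n : ℝ) / (2 * (k : ℝ) * ((n : ℝ) - (k : ℝ))) * (1 / (n.choose k : ℝ))
      = (n : ℝ) * ((1 / ((n.factorial : ℝ) * 2)) *
          (((k - 1).factorial : ℝ) * ((n - k - 1).factorial : ℝ))) := by
  have hkle : k ≤ n := hkn.le
  have key : (n.choose k) * (k * (k-1).factorial) * ((n-k) * (n-k-1).factorial)
      = n.factorial := by
    rw [Nat.mul_factorial_pred (Nat.one_le_iff_ne_zero.mp hk1), Nat.mul_factorial_pred (by omega)]
    exact Nat.choose_mul_factorial_mul_factorial hkle
  have keyR : ((n.choose k : ℝ)) * ((k : ℝ) * ((k-1).factorial : ℝ)) *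
      (((n:ℝ) - (k:ℝ)) * ((n-k-1).factorial : ℝ)) = (n.factorial : ℝ) := by
    have : ((n-k : ℕ) : ℝ) = (n:ℝ) - (k:ℝ) := by push_cast [hkle]; ring
    rw [← this]
    exact_mod_cast key
  have hc : ((n.choose k : ℝ)) ≠ 0 := by
    exact Nat.cast_ne_zero.mpr (Nat.choose_pos hkle).ne'
  have hf : ((n.factorial : ℝ)) ≠ 0 := by positivity
  have hk0 : (k : ℝ) ≠ 0 := by positivity
  have hnk : ((n:ℝ) - (k:ℝ)) ≠ 0 := by
    have : (k:ℝ) < (n:ℝ) := by exact_mod_cast hkn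
    linarith
  field_simp
  rw [← keyR]
  ring

lemma crpWeight_pair {n : ℕ} (S : Finset (Fin n)) :
    crpWeight ![S, Sᶜ] = (1 / ((n.factorial : ℝ) * 2)) *
      (((S.card - 1).factorial : ℝ) * ((n - S.card - 1).factorial : ℝ)) := by
  unfold crpWeight
  rw [Fin.prod_univ_two]
  simp [Nat.factorial_two, Finset.card_compl, Fintype.card_fin]

lemma key_term (n : ℕ) (hn : 2 ≤ n) (x : Fin n → ℝ) (S : Finset (Fin n))
    (h1 : S.Nonempty) (h2 : Sᶜ.Nonempty) :
    (n : ℝ) / (2 * (S.card : ℝ) * ((n : ℝ) - (S.card : ℝ))) *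
        (1 / (n.choose S.card : ℝ)) * hKernel x S
      ≤ (n : ℝ) ^ (3 / 2 : ℝ) * (crpWeight ![S, Sᶜ] * (hKernel x S * hKernel x Sᶜ)) := by
  have hk1 : 1 ≤ S.card := Finset.card_pos.mpr h1
  have hcc : Sᶜ.card = n - S.card := by rw [Finset.card_compl, Fintype.card_fin]
  have hkn : S.card < n := by
    have := Finset.card_pos.mpr h2
    rw [hcc] at this
    omega
  have hW : 0 ≤ (1 / ((n.factorial : ℝ) * 2)) *
      (((S.card - 1).factorial : ℝ) * ((n - S.card - 1).factorial : ℝ)) := by positivity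
  have hnpos : (0:ℝ) < n := by positivity
  have h32 : (n : ℝ) ^ (3 / 2 : ℝ) = (n : ℝ) * Real.sqrt n := by
    rw [show (3/2 : ℝ) = 1 + 1/2 by norm_num, Real.rpow_add hnpos, Real.rpow_one,
      Real.sqrt_eq_rpow]
  have hge : (Real.sqrt n)⁻¹ ≤ hKernel x Sᶜ := by
    apply hKernel_ge
    rw [hcc]; omega
  have hsq : (0:ℝ) < Real.sqrt n := Real.sqrt_pos.mpr hnpos
  rw [coef_eq n S.card hk1 hkn, crpWeight_pair]
  set W := (1 / ((n.factorial : ℝ) * 2)) *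
      (((S.card - 1).factorial : ℝ) * ((n - S.card - 1).factorial : ℝ)) with hWdef
  calc (n:ℝ) * W * hKernel x S
      = ((n:ℝ) * Real.sqrt n * (Real.sqrt n)⁻¹) * (W * hKernel x S) := by
        field_simp
    _ ≤ ((n:ℝ) * Real.sqrt n * hKernel x Sᶜ) * (W * hKernel x S) := by
        apply mul_le_mul_of_nonneg_right _ (mul_nonneg hW (hKernel_nonneg x S))
        · apply mul_le_mul_of_nonneg_left hge (by positivity)
    _ = (n : ℝ) ^ (3/2 : ℝ) * (W * (hKernel x S * hKernel x Sᶜ)) := by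
        rw [h32]; ring


/-- For `n ≥ 2` and `x ∈ ℝⁿ`,
`R₂(x) ≥ ∑_{k=1}^{n-1} (n/(2k(n-k))) U_k(x)`. -/
theorem Rstat_two_ge_sum_Ustat (n : ℕ) (hn : 2 ≤ n) (x : Fin n → ℝ) :
    Rstat 2 n x ≥
      ∑ k ∈ Finset.Icc 1 (n - 1),
        (n : ℝ) / (2 * (k : ℝ) * ((n : ℝ) - (k : ℝ))) * Ustat n k x := by
  classical
  set T : Finset (Finset (Fin n)) :=
    Finset.univ.filter (fun S : Finset (Fin n) => S.Nonempty ∧ Sᶜ.Nonempty) with hT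
  have hpz := pZero_pos x
  -- rewrite Rstat
  have hRe : Rstat 2 n x = ∑ S ∈ T,
      (n:ℝ)^(3/2:ℝ) * (crpWeight ![S,Sᶜ] * (hKernel x S * hKernel x Sᶜ)) := by
    unfold Rstat
    rw [pJoint_two, ← hT]
    have hcongr : ∀ S ∈ T, crpWeight ![S,Sᶜ] * (clusterMarginal x S * clusterMarginal x Sᶜ)
        = pZero x * (crpWeight ![S,Sᶜ] * (hKernel x S * hKernel x Sᶜ)) := by
      intro S _
      rw [clusterMarginal_eq, clusterMarginal_eq]
      unfold pZero
      rw [← Finset.prod_mul_prod_compl S (fun j => stdNormalPDF (x j))]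
      ring
    rw [Finset.sum_congr rfl hcongr, ← Finset.mul_sum]
    rw [mul_comm (pZero x), ← mul_assoc, mul_div_assoc, div_self hpz.ne', mul_one,
      Finset.mul_sum]
  -- rewrite RHS
  have hTb : T = (Finset.Icc 1 (n-1)).biUnion
      (fun k => Finset.powersetCard k (Finset.univ : Finset (Fin n))) := by
    ext S
    simp only [hT, mem_filter, mem_univ, true_and, mem_biUnion, mem_Icc,
      Finset.mem_powersetCard_univ]
    constructor
    · rintro ⟨h1, h2⟩
      have hc1 := Finset.card_pos.mpr h1
      have hc2 := Finset.card_pos.mpr h2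
      rw [Finset.card_compl, Fintype.card_fin] at hc2
      exact ⟨S.card, ⟨hc1, by omega⟩, rfl⟩
    · rintro ⟨k, ⟨hk1, hk2⟩, rfl⟩
      refine ⟨Finset.card_pos.mp (by omega), Finset.card_pos.mp ?_⟩
      rw [Finset.card_compl, Fintype.card_fin]
      omega
  have hdisj : (↑(Finset.Icc 1 (n-1)) : Set ℕ).PairwiseDisjoint
      (fun k => Finset.powersetCard k (Finset.univ : Finset (Fin n))) := by
    intro a _ b _ hab
    apply Finset.disjoint_left.mpr
    intro S hSa hSb
    rw [Finset.mem_powersetCard_univ] at hSa hSb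
    exact hab (hSa.symm.trans hSb)
  have hRHS : ∑ k ∈ Finset.Icc 1 (n - 1),
        (n : ℝ) / (2 * (k : ℝ) * ((n : ℝ) - (k : ℝ))) * Ustat n k x
      = ∑ S ∈ T, (n : ℝ) / (2 * (S.card : ℝ) * ((n : ℝ) - (S.card : ℝ))) *
          (1 / (n.choose S.card : ℝ)) * hKernel x S := by
    rw [hTb, Finset.sum_biUnion hdisj]
    apply Finset.sum_congr rfl
    intro k _
    have hcg : ∀ S ∈ Finset.powersetCard k (Finset.univ : Finset (Fin n)),
        (n:ℝ)/(2*(S.card:ℝ)*((n:ℝ)-(S.card:ℝ))) * (1/(n.choose S.card:ℝ)) * hKernel x S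
          = (n:ℝ)/(2*(k:ℝ)*((n:ℝ)-(k:ℝ))) * (1/(n.choose k:ℝ)) * hKernel x S := by
      intro S hS
      rw [Finset.mem_powersetCard_univ] at hS
      rw [hS]
    rw [Finset.sum_congr rfl hcg, ← Finset.mul_sum]
    unfold Ustat
    ring
  rw [ge_iff_le, hRHS, hRe]
  apply Finset.sum_le_sum
  intro S hS
  rw [hT, mem_filter] at hS
  exact key_term n hn x S hS.2.1 hS.2.2
end
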